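/- (Order constraint in the worst-case construction of Figure 2, underlying Lemma 4/Theorem 3 of the paper.) Let v_1, …, v_n be a bijective enumeration of the vertices of G_n with v_1 = u_1, and suppose Dijkstra's label recursion processed in this order is correct, i.e. D_j(v_j) = d(v_j) for every j. Then for every j ≥ 2, if v_j = u_k with k ≥ 3, there exists an earlier index j' with 2 ≤ j' < j such that v_{j'} = u_m for some m with 2 ≤ m < k; in particular v_2 = u_2. -/

import Mathlib

open scoped ENNReal

/-- The length of the path `p 0, p 1, …, p k` in a graph on `Fin n` with
edge-weight function `w` (where `w u v = ∞` encodes the absence of an edge). -/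
noncomputable def pathCost {n : ℕ} (w : Fin n → Fin n → ℝ≥0∞) (p : ℕ → Fin n) (k : ℕ) : ℝ≥0∞ :=
  ∑ i ∈ Finset.range k, w (p i) (p (i + 1))

/-- The shortest-path distance from `s` to `v`: the infimum over all finite paths
from `s` to `v` of their lengths. -/
noncomputable def spDist {n : ℕ} (w : Fin n → Fin n → ℝ≥0∞) (s v : Fin n) : ℝ≥0∞ :=
  ⨅ (k : ℕ) (p : ℕ → Fin n) (_ : p 0 = s) (_ : p k = v), pathCost w p k

/-- Dijkstra's label recursion, processed according to the enumeration `e` (0-indexed):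
`dijkstraD w s e 0` is the initial labelling (`0` at `s`, `∞` elsewhere), and step `j`
relaxes all edges out of the extracted vertex `e j`.  The paper's `D_j` is
`dijkstraD w s e (j-1)`; the extraction value of `v_j` is `dijkstraD w s e (j-1) (e (j-1))`. -/
noncomputable def dijkstraD {n : ℕ} (w : Fin n → Fin n → ℝ≥0∞) (s : Fin n) (e : Fin n → Fin n) :
    ℕ → Fin n → ℝ≥0∞
  | 0 => fun u => if u = s then 0 else ⊤
  | j + 1 => fun u =>
      if h : j < n then
        min (dijkstraD w s e j u) (dijkstraD w s e j (e ⟨j, h⟩) + w (e ⟨j, h⟩) u)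
      else dijkstraD w s e j u

/-- The edge-weight function of the worst-case graph `G_n` of Figure 2 (0-indexed:
vertex `u_k` of the paper is index `k - 1`).  From the source (index 0) there is an
edge of weight `c j` to every other vertex `j`; between two non-source vertices
`i < j` there is a zero-length edge; all other ordered pairs have no edge (`∞`). -/
noncomputable def figW (n : ℕ) (c : Fin n → ℝ) : Fin n → Fin n → ℝ≥0∞ := fun i j =>
  if i.val = 0 ∧ 1 ≤ j.val then ENNReal.ofReal (c j)
  else if 1 ≤ i.val ∧ i.val < j.val then 0
  else ⊤

lemma spDist_le_c1 (n : ℕ) (hn : 2 < n) (c : Fin n → ℝ) (v : Fin n) (hv : 1 ≤ v.val) :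
    spDist (figW n c) ⟨0, by omega⟩ v ≤ ENNReal.ofReal (c ⟨1, by omega⟩) := by
  rcases eq_or_lt_of_le hv with h1 | h2
  · -- v.val = 1
    have hv1 : v = ⟨1, by omega⟩ := by ext; simp; omega
    set p : ℕ → Fin n := fun i => if i = 0 then ⟨0, by omega⟩ else v with hp
    have : spDist (figW n c) ⟨0, by omega⟩ v ≤ pathCost (figW n c) p 1 := by
      exact iInf_le_of_le 1 (iInf_le_of_le p (iInf_le_of_le (by simp [hp]) (iInf_le _ (by simp [hp]))))
    refine this.trans ?_
    simp [pathCost, Finset.sum_range_succ, hp, figW, hv1]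
  · -- v.val ≥ 2
    set p : ℕ → Fin n := fun i => if i = 0 then ⟨0, by omega⟩ else if i = 1 then ⟨1, by omega⟩ else v with hp
    have : spDist (figW n c) ⟨0, by omega⟩ v ≤ pathCost (figW n c) p 2 := by
      exact iInf_le_of_le 2 (iInf_le_of_le p (iInf_le_of_le (by simp [hp]) (iInf_le _ (by simp [hp]))))
    refine this.trans ?_
    have h12 : (⟨1, by omega⟩ : Fin n) < v := h2
    simp [pathCost, Finset.sum_range_succ, hp, figW, h12]

lemma dijkstra_lb (n : ℕ) (hn : 2 < n) (c : Fin n → ℝ) (e : Fin n → Fin n) :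
    ∀ j : ℕ, ∀ u : Fin n, 1 ≤ u.val →
      (∃ i : ℕ, ∃ hi : i < n, i < j ∧ 1 ≤ (e ⟨i, hi⟩).val ∧ (e ⟨i, hi⟩).val < u.val) ∨
      ENNReal.ofReal (c u) ≤ dijkstraD (figW n c) ⟨0, by omega⟩ e j u := by
  intro j
  induction j with
  | zero =>
    intro u hu
    right
    have : u ≠ ⟨0, by omega⟩ := by intro h; rw [h] at hu; simp at hu
    simp [dijkstraD, this]
  | succ j ih =>
    intro u hu
    rcases ih u hu with hL | hR
    · left; obtain ⟨i, hi, hij, h1, h2⟩ := hL; exact ⟨i, hi, by omega, h1, h2⟩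
    · by_cases h : j < n
      · set m := e ⟨j, h⟩ with hm
        rcases Nat.lt_or_ge m.val 1 with hm0 | hm1
        · -- m is the source
          right
          have hw : figW n c m u = ENNReal.ofReal (c u) := by
            simp [figW, show m.val = 0 by omega, hu]
          simp only [dijkstraD, dif_pos h, le_min_iff]
          refine ⟨hR, ?_⟩
          rw [← hm, hw]
          exact le_add_self
        · rcases Nat.lt_or_ge m.val u.val with hlt | hge
          · left; exact ⟨j, h, by omega, hm1, hlt⟩
          · right
            have hw : figW n c m u = ⊤ := by
              rw [figW]
              rw [if_neg (by omega), if_neg (by omega)]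
            simp only [dijkstraD, dif_pos h, le_min_iff]
            refine ⟨hR, ?_⟩
            rw [← hm, hw]
            simp
      · right
        simp only [dijkstraD, dif_neg h]
        exact hR

/-- Order constraint in the worst-case construction of Figure 2.  If Dijkstra's label
recursion processed along a bijective enumeration `e` of the vertices of `G_n`
(starting at the source `u_1`, index 0) is correct, then whenever `v_j = u_k` with
`k ≥ 3` (0-indexed: `(e j).val ≥ 2`) is extracted at a step `j ≥ 2` (0-indexed:
`j.val ≥ 1`), some vertex `u_m` with `2 ≤ m < k` (0-indexed: `1 ≤ (e j').val < (e j).val`)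
is extracted at an earlier step `j'` with `2 ≤ j' < j` (0-indexed: `1 ≤ j'.val`);
in particular the second extracted vertex is `u_2` (0-indexed: `e 1 = 1`). -/
theorem figW_order_constraint (n : ℕ) (hn : 3 ≤ n) (c : Fin n → ℝ)
    (hc1 : 0 < c ⟨1, by omega⟩)
    (hmono : ∀ i j : Fin n, 1 ≤ i.val → i < j → c i < c j)
    (e : Fin n → Fin n) (he : Function.Bijective e) (hes : e ⟨0, by omega⟩ = ⟨0, by omega⟩)
    (hcorrect : ∀ j : Fin n,
      dijkstraD (figW n c) ⟨0, by omega⟩ e j.val (e j) =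
        spDist (figW n c) ⟨0, by omega⟩ (e j)) :
    (∀ j : Fin n, 1 ≤ j.val → 2 ≤ (e j).val →
      ∃ j' : Fin n, 1 ≤ j'.val ∧ j' < j ∧ 1 ≤ (e j').val ∧ (e j').val < (e j).val) ∧
    e ⟨1, by omega⟩ = ⟨1, by omega⟩ := by
  have main : ∀ j : Fin n, 1 ≤ j.val → 2 ≤ (e j).val →
      ∃ j' : Fin n, 1 ≤ j'.val ∧ j' < j ∧ 1 ≤ (e j').val ∧ (e j').val < (e j).val := by
    intro j hj hej
    have h1 := hcorrect j
    have h2 := spDist_le_c1 n hn c (e j) (by omega)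
    have hcc : c ⟨1, by omega⟩ < c (e j) :=
      hmono ⟨1, by omega⟩ (e j) (by simp) (by rw [Fin.lt_def]; simp; omega)
    have hlt : spDist (figW n c) ⟨0, by omega⟩ (e j) < ENNReal.ofReal (c (e j)) := by
      refine lt_of_le_of_lt h2 ?_
      rw [ENNReal.ofReal_lt_ofReal_iff (lt_trans hc1 hcc)]
      exact hcc
    rcases dijkstra_lb n hn c e j.val (e j) (by omega) with hL | hR
    · obtain ⟨i, hi, hij, ha, hb⟩ := hL
      refine ⟨⟨i, hi⟩, ?_, ?_, ha, hb⟩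
      · by_contra hc
        simp only [Fin.val_mk] at hc
        have hi0 : (⟨i, hi⟩ : Fin n) = ⟨0, by omega⟩ := Fin.ext (by simp only [Fin.val_mk]; omega)
        rw [hi0, hes] at ha
        simp at ha
      · exact hij
    · exact absurd ((hR.trans_eq h1).trans_lt hlt) (lt_irrefl _)
  refine ⟨main, ?_⟩
  have h0 : (e ⟨1, by omega⟩).val ≠ 0 := by
    intro h
    have heq : e ⟨1, by omega⟩ = e ⟨0, by omega⟩ := by
      rw [hes]; exact Fin.ext (by simpa using h)
    have := he.injective heq
    simp [Fin.ext_iff] at this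
  have h2 : (e ⟨1, by omega⟩).val < 2 := by
    by_contra hge
    push_neg at hge
    obtain ⟨j', hj'1, hj'lt, _, _⟩ := main ⟨1, by omega⟩ (by simp) hge
    rw [Fin.lt_def] at hj'lt
    simp at hj'lt
    omega
  exact Fin.ext (by simp; omega)
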